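/- Let C be a finite set with |C| ≥ 2 and let N : C × C → ℤ be antisymmetric (N(a,b) = −N(b,a) for all a,b, so N(a,a) = 0) with every value N(a,b) even. Then there exists a profile P of votes on C whose net advantage function equals N, i.e., netadv_P(a,b) = N(a,b) for all distinct a,b, and P can be taken to consist of exactly ∑ |N(a,b)| votes, the sum taken over unordered pairs {a,b} of distinct candidates. -/

import Mathlib

/-- A vote over a finite candidate set `C` is a linear order on `C`, encoded as the
ranking equivalence sending each candidate to its position (position `0` is the top). -/
abbrev Vote (C : Type*) [Fintype C] : Type _ := C ≃ Fin (Fintype.card C)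

/-- `adv P a b` is the number of votes in the profile `P` ranking `a` above `b`. -/
def adv {C : Type*} [Fintype C] (P : List (Vote C)) (a b : C) : ℕ :=
  P.countP (fun v => decide (v a < v b))

/-- The net advantage of `a` over `b` in the profile `P`. -/
def netadv {C : Type*} [Fintype C] (P : List (Vote C)) (a b : C) : ℤ :=
  (adv P a b : ℤ) - (adv P b a : ℤ)

section McGarvey

variable {C : Type*} [Fintype C] [DecidableEq C]

/-- First vote of the gadget: `a` at position 0, `b` at position 1. -/
noncomputable def mkv1 (hn : 2 ≤ Fintype.card C) (a b : C) : Vote C :=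
  ((Fintype.equivFin C).trans
      (Equiv.swap ((Fintype.equivFin C) a) ⟨0, by omega⟩)).trans
    (Equiv.swap (((Fintype.equivFin C).trans
      (Equiv.swap ((Fintype.equivFin C) a) ⟨0, by omega⟩)) b) ⟨1, by omega⟩)

/-- The permutation of positions used for the second vote of the gadget. -/
noncomputable def rrev (hn : 2 ≤ Fintype.card C) : Equiv.Perm (Fin (Fintype.card C)) :=
  (Equiv.swap ⟨0, by omega⟩ ⟨1, by omega⟩).trans Fin.revPerm

noncomputable def mkv2 (hn : 2 ≤ Fintype.card C) (a b : C) : Vote C :=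
  (mkv1 hn a b).trans (rrev hn)

noncomputable def gadget (hn : 2 ≤ Fintype.card C) (a b : C) : List (Vote C) :=
  [mkv1 hn a b, mkv2 hn a b]

lemma mkv1_a (hn : 2 ≤ Fintype.card C) {a b : C} (hab : a ≠ b) :
    ((mkv1 hn a b) a).val = 0 := by
  have hne1 : (⟨0, by omega⟩ : Fin (Fintype.card C)) ≠
      Equiv.swap ((Fintype.equivFin C) a) ⟨0, by omega⟩ ((Fintype.equivFin C) b) := by
    intro h
    apply hab
    apply (Fintype.equivFin C).injective
    apply (Equiv.swap ((Fintype.equivFin C) a) ⟨0, by omega⟩).injective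
    rw [← h, Equiv.swap_apply_left]
  have hne2 : (⟨0, by omega⟩ : Fin (Fintype.card C)) ≠
      (⟨1, by omega⟩ : Fin (Fintype.card C)) := by
    intro h; simpa using congrArg Fin.val h
  simp only [mkv1, Equiv.trans_apply, Equiv.swap_apply_left]
  rw [Equiv.swap_apply_of_ne_of_ne hne1 hne2]

lemma mkv1_b (hn : 2 ≤ Fintype.card C) (a b : C) :
    ((mkv1 hn a b) b).val = 1 := by
  simp only [mkv1, Equiv.trans_apply]
  rw [Equiv.swap_apply_left]

lemma rrev_val (hn : 2 ≤ Fintype.card C) (i : Fin (Fintype.card C)) :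
    ((rrev hn) i).val =
      if i.val = 0 then Fintype.card C - 2
      else if i.val = 1 then Fintype.card C - 1
      else Fintype.card C - 1 - i.val := by
  simp only [rrev, Equiv.trans_apply, Fin.revPerm_apply]
  rcases eq_or_ne i.val 0 with h0 | h0
  · have hi : i = (⟨0, by omega⟩ : Fin (Fintype.card C)) := Fin.ext h0
    rw [hi, Equiv.swap_apply_left]
    simp [Fin.val_rev]
  rcases eq_or_ne i.val 1 with h1 | h1
  · have hi : i = (⟨1, by omega⟩ : Fin (Fintype.card C)) := Fin.ext h1
    rw [hi, Equiv.swap_apply_right]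
    simp [Fin.val_rev, h1]
  · rw [Equiv.swap_apply_of_ne_of_ne (fun h => h0 (congrArg Fin.val h))
      (fun h => h1 (congrArg Fin.val h))]
    simp only [Fin.val_rev, if_neg h0, if_neg h1]
    omega

lemma adv_pair (u v : Vote C) (c d : C) :
    adv [u, v] c d = (if u c < u d then 1 else 0) + (if v c < v d then 1 else 0) := by
  simp only [adv, List.countP_cons, List.countP_nil, decide_eq_true_eq]
  split_ifs <;> simp

set_option maxHeartbeats 1600000 in
lemma netadv_gadget (hn : 2 ≤ Fintype.card C) {a b c d : C} (hab : a ≠ b) (hcd : c ≠ d) :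
    netadv (gadget hn a b) c d =
      if a = c ∧ b = d then 2 else if a = d ∧ b = c then -2 else 0 := by
  classical
  set v1 := mkv1 hn a b with hv1def
  set v2 := mkv2 hn a b with hv2def
  have expand : netadv (gadget hn a b) c d =
      ((if v1 c < v1 d then 1 else 0) + (if v2 c < v2 d then 1 else 0) : ℤ)
      - ((if v1 d < v1 c then 1 else 0) + (if v2 d < v2 c then 1 else 0)) := by
    simp only [netadv, gadget, adv_pair]
    push_cast [apply_ite (fun n : ℕ => (n : ℤ))]
    norm_num
    rfl
  rw [expand]
  have ha : (v1 a).val = 0 := mkv1_a hn hab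
  have hb : (v1 b).val = 1 := mkv1_b hn a b
  have hvc2 : (v2 c).val = if (v1 c).val = 0 then Fintype.card C - 2
      else if (v1 c).val = 1 then Fintype.card C - 1
      else Fintype.card C - 1 - (v1 c).val := rrev_val hn (v1 c)
  have hvd2 : (v2 d).val = if (v1 d).val = 0 then Fintype.card C - 2
      else if (v1 d).val = 1 then Fintype.card C - 1
      else Fintype.card C - 1 - (v1 d).val := rrev_val hn (v1 d)
  have hca : (a = c) ↔ (v1 c).val = 0 := by
    constructor
    · rintro rfl; exact ha
    · intro h; exact (v1.injective (Fin.ext (h.trans ha.symm))).symm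
  have hcb : (b = c) ↔ (v1 c).val = 1 := by
    constructor
    · rintro rfl; exact hb
    · intro h; exact (v1.injective (Fin.ext (h.trans hb.symm))).symm
  have hda : (a = d) ↔ (v1 d).val = 0 := by
    constructor
    · rintro rfl; exact ha
    · intro h; exact (v1.injective (Fin.ext (h.trans ha.symm))).symm
  have hdb : (b = d) ↔ (v1 d).val = 1 := by
    constructor
    · rintro rfl; exact hb
    · intro h; exact (v1.injective (Fin.ext (h.trans hb.symm))).symm
  have hcdne : (v1 c).val ≠ (v1 d).val := by
    intro h; exact hcd (v1.injective (Fin.ext h))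
  have hclt : (v1 c).val < Fintype.card C := (v1 c).isLt
  have hdlt : (v1 d).val < Fintype.card C := (v1 d).isLt
  simp only [hca, hcb, hda, hdb, Fin.lt_def]
  split_ifs at hvc2 hvd2 ⊢ <;> omega

lemma netadv_append (P Q : List (Vote C)) (c d : C) :
    netadv (P ++ Q) c d = netadv P c d + netadv Q c d := by
  simp only [netadv, adv, List.countP_append]
  push_cast; ring

lemma netadv_nil (c d : C) : netadv ([] : List (Vote C)) c d = 0 := by
  simp [netadv, adv]

lemma netadv_flatten (l : List (List (Vote C))) (c d : C) :
    netadv l.flatten c d = (l.map (fun L => netadv L c d)).sum := by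
  induction l with
  | nil => simp [netadv_nil]
  | cons h t ih => simp [List.flatten_cons, netadv_append, ih]

/-- The repeated gadget for a pair. -/
noncomputable def gadgetRep (hn : 2 ≤ Fintype.card C) (N : C × C → ℤ) (p : C × C) : List (Vote C) :=
  (List.replicate ((N p).toNat / 2) (gadget hn p.1 p.2)).flatten

set_option maxHeartbeats 1600000 in
lemma netadv_gadgetRep (hn : 2 ≤ Fintype.card C) (N : C × C → ℤ) (p : C × C) (c d : C) :
    netadv (gadgetRep hn N p) c d
      = (((N p).toNat / 2 : ℕ) : ℤ) * netadv (gadget hn p.1 p.2) c d := by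
  rw [gadgetRep, netadv_flatten, List.map_replicate, List.sum_replicate]
  push_cast
  rw [nsmul_eq_mul]
  push_cast
  ring

lemma length_gadgetRep (hn : 2 ≤ Fintype.card C) (N : C × C → ℤ) (p : C × C) :
    (gadgetRep hn N p).length = 2 * ((N p).toNat / 2) := by
  simp [gadgetRep, gadget, List.length_flatten, List.map_replicate, List.sum_replicate,
    mul_comm]

lemma sum_toList_map {α M : Type*} [AddCommMonoid M] (s : Finset α) (f : α → M) :
    (s.toList.map f).sum = ∑ x ∈ s, f x := by
  rw [← Multiset.sum_coe, ← Multiset.map_coe, Finset.coe_toList]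
  rfl

end McGarvey

/-- **McGarvey's method, even case.** Every antisymmetric integer-valued function `N` on
pairs of candidates all of whose values are even is the net advantage function of some
profile; moreover the profile can be taken to have exactly `∑ |N(a,b)|` votes, the sum
over unordered pairs of distinct candidates (stated here as: twice the number of votes
equals the sum of `|N(a,b)|` over all ordered pairs). -/
theorem mcgarvey_even {C : Type*} [Fintype C] [DecidableEq C]
    (hm : 2 ≤ Fintype.card C)
    (N : C × C → ℤ)
    (hanti : ∀ a b : C, N (a, b) = - N (b, a))
    (heven : ∀ a b : C, Even (N (a, b))) :
    ∃ P : List (Vote C),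
      (∀ a b : C, a ≠ b → netadv P a b = N (a, b)) ∧
      2 * (P.length : ℤ) = ∑ a : C, ∑ b : C, |N (a, b)| := by
  classical
  refine ⟨((Finset.univ : Finset (C × C)).toList.map (gadgetRep hm N)).flatten, ?_, ?_⟩
  · intro c d hcd
    rw [netadv_flatten, List.map_map]
    rw [show ((Finset.univ : Finset (C × C)).toList.map
        ((fun L => netadv L c d) ∘ gadgetRep hm N)).sum
        = ∑ p : C × C, netadv (gadgetRep hm N p) c d from sum_toList_map _ _]
    have key : ∀ p : C × C, netadv (gadgetRep hm N p) c d =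
        (if p = (c, d) then ((2 * ((N (c, d)).toNat / 2) : ℕ) : ℤ) else 0)
        + (if p = (d, c) then -((2 * ((N (d, c)).toNat / 2) : ℕ) : ℤ) else 0) := by
      rintro ⟨x, y⟩
      rw [netadv_gadgetRep]
      rcases eq_or_ne x y with rfl | h
      · have h0 : N (x, x) = 0 := by have := hanti x x; omega
        rw [if_neg (by rintro h'; injection h' with h1 h2; exact hcd (h1.symm.trans h2)),
          if_neg (by rintro h'; injection h' with h1 h2; exact hcd (h2.symm.trans h1))]
        simp [h0]
      · rw [netadv_gadget hm h hcd]
        simp only [Prod.mk.injEq]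
        by_cases h1 : x = c ∧ y = d
        · obtain ⟨rfl, rfl⟩ := h1
          simp only [and_self, if_true, h, false_and, and_false, if_false]
          push_cast
          ring
        · by_cases h2 : x = d ∧ y = c
          · obtain ⟨rfl, rfl⟩ := h2
            simp only [and_self, if_true, h, false_and, and_false, if_false, if_neg h1]
            push_cast
            ring
          · simp only [if_neg h1, if_neg h2, mul_zero, add_zero]
    rw [Finset.sum_congr rfl (fun p _ => key p), Finset.sum_add_distrib,
      Finset.sum_ite_eq' Finset.univ ((c, d) : C × C),
      Finset.sum_ite_eq' Finset.univ ((d, c) : C × C)]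
    simp only [Finset.mem_univ, if_true]
    obtain ⟨r, hr⟩ := heven c d
    have hac := hanti c d
    omega
  · rw [List.length_flatten, List.map_map]
    rw [show ((Finset.univ : Finset (C × C)).toList.map
        (List.length ∘ gadgetRep hm N)).sum
        = ∑ p : C × C, (gadgetRep hm N p).length from sum_toList_map _ _]
    have hlen : ∀ p : C × C, ((gadgetRep hm N p).length : ℤ) = ((N p).toNat : ℤ) := by
      rintro ⟨x, y⟩
      rw [length_gadgetRep]
      obtain ⟨r, hr⟩ := heven x y
      push_cast
      omega
    push_cast
    rw [Finset.sum_congr rfl (fun p _ => hlen p)]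
    calc 2 * ∑ p : C × C, ((N p).toNat : ℤ)
        = ∑ p : C × C, (((N p).toNat : ℤ) + ((N (p.2, p.1)).toNat : ℤ)) := by
          rw [Finset.sum_add_distrib,
            Fintype.sum_equiv (Equiv.prodComm C C)
              (fun p : C × C => ((N (p.2, p.1)).toNat : ℤ))
              (fun p : C × C => ((N p).toNat : ℤ)) (fun p => rfl)]
          ring
      _ = ∑ p : C × C, |N p| := by
          refine Finset.sum_congr rfl ?_
          rintro ⟨x, y⟩ -
          have h1 := hanti x y
          simp only [Int.abs_eq_natAbs]
          omega
      _ = ∑ a : C, ∑ b : C, |N (a, b)| := Fintype.sum_prod_type _
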